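/- The setwise products of the six subsets V₀, V₊, V₋, V₁, V₂, V₃ of the quaternions obey the following multiplication table: V₀·V_x = V_x·V₀ = V_x for every x ∈ {0,+,−,1,2,3}; V₊·V₊ = V₋, V₊·V₋ = V₋·V₊ = V₀, V₋·V₋ = V₊; V₊·V₁ = V₃, V₊·V₂ = V₁, V₊·V₃ = V₂; V₋·V₁ = V₂, V₋·V₂ = V₃, V₋·V₃ = V₁; V₁·V₁ = V₂·V₂ = V₃·V₃ = V₀; V₁·V₂ = V₃·V₁ = V₂·V₃ = V₊; V₂·V₁ = V₁·V₃ = V₃·V₂ = V₋ (here A·B denotes the set of all products ab with a ∈ A, b ∈ B). -/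

import Mathlib

open Quaternion Pointwise

noncomputable section

/-- The quaternion `a + b i + c j + d k`. -/
def q (a b c d : ℝ) : ℍ[ℝ] := ⟨a, b, c, d⟩

/-- `1/√2`. -/
def s : ℝ := (Real.sqrt 2)⁻¹

def V₀ : Set ℍ[ℝ] :=
  {q 1 0 0 0, q (-1) 0 0 0, q 0 1 0 0, q 0 (-1) 0 0,
   q 0 0 1 0, q 0 0 (-1) 0, q 0 0 0 1, q 0 0 0 (-1)}

/-- `½(±1 ± i ± j ± k)` with an even number of plus signs. -/
def Vp : Set ℍ[ℝ] :=
  {q (1/2) (1/2) (1/2) (1/2), q (-(1/2)) (-(1/2)) (-(1/2)) (-(1/2)),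
   q (1/2) (1/2) (-(1/2)) (-(1/2)), q (1/2) (-(1/2)) (1/2) (-(1/2)),
   q (1/2) (-(1/2)) (-(1/2)) (1/2), q (-(1/2)) (1/2) (1/2) (-(1/2)),
   q (-(1/2)) (1/2) (-(1/2)) (1/2), q (-(1/2)) (-(1/2)) (1/2) (1/2)}

/-- `½(±1 ± i ± j ± k)` with an odd number of plus signs. -/
def Vm : Set ℍ[ℝ] :=
  {q (1/2) (-(1/2)) (-(1/2)) (-(1/2)), q (-(1/2)) (1/2) (-(1/2)) (-(1/2)),
   q (-(1/2)) (-(1/2)) (1/2) (-(1/2)), q (-(1/2)) (-(1/2)) (-(1/2)) (1/2),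
   q (1/2) (1/2) (1/2) (-(1/2)), q (1/2) (1/2) (-(1/2)) (1/2),
   q (1/2) (-(1/2)) (1/2) (1/2), q (-(1/2)) (1/2) (1/2) (1/2)}

/-- `(±1 ± i)/√2` and `(±j ± k)/√2`. -/
def V₁ : Set ℍ[ℝ] :=
  {q s s 0 0, q s (-s) 0 0, q (-s) s 0 0, q (-s) (-s) 0 0,
   q 0 0 s s, q 0 0 s (-s), q 0 0 (-s) s, q 0 0 (-s) (-s)}

/-- `(±1 ± j)/√2` and `(±k ± i)/√2`. -/
def V₂ : Set ℍ[ℝ] :=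
  {q s 0 s 0, q s 0 (-s) 0, q (-s) 0 s 0, q (-s) 0 (-s) 0,
   q 0 s 0 s, q 0 s 0 (-s), q 0 (-s) 0 s, q 0 (-s) 0 (-s)}

/-- `(±1 ± k)/√2` and `(±i ± j)/√2`. -/
def V₃ : Set ℍ[ℝ] :=
  {q s 0 0 s, q s 0 0 (-s), q (-s) 0 0 s, q (-s) 0 0 (-s),
   q 0 s s 0, q 0 s (-s) 0, q 0 (-s) s 0, q 0 (-s) (-s) 0}


-- ### Auxiliary computable model: the ring ℤ[√2]

structure K2 where
  x : ℤ
  y : ℤ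
deriving DecidableEq

namespace K2

instance : Zero K2 := ⟨⟨0,0⟩⟩
instance : One K2 := ⟨⟨1,0⟩⟩
instance : Add K2 := ⟨fun u v => ⟨u.x+v.x, u.y+v.y⟩⟩
instance : Mul K2 := ⟨fun u v => ⟨u.x*v.x + 2*u.y*v.y, u.x*v.y + u.y*v.x⟩⟩
instance : Neg K2 := ⟨fun u => ⟨-u.x, -u.y⟩⟩
instance : Sub K2 := ⟨fun u v => ⟨u.x - v.x, u.y - v.y⟩⟩

@[simp] lemma add_x (u v : K2) : (u+v).x = u.x+v.x := rfl
@[simp] lemma add_y (u v : K2) : (u+v).y = u.y+v.y := rfl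
@[simp] lemma mul_x (u v : K2) : (u*v).x = u.x*v.x + 2*u.y*v.y := rfl
@[simp] lemma mul_y (u v : K2) : (u*v).y = u.x*v.y + u.y*v.x := rfl
@[simp] lemma neg_x (u : K2) : (-u).x = -u.x := rfl
@[simp] lemma neg_y (u : K2) : (-u).y = -u.y := rfl
@[simp] lemma sub_x (u v : K2) : (u-v).x = u.x-v.x := rfl
@[simp] lemma sub_y (u v : K2) : (u-v).y = u.y-v.y := rfl
@[simp] lemma zero_x : (0 : K2).x = 0 := rfl
@[simp] lemma zero_y : (0 : K2).y = 0 := rfl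
@[simp] lemma one_x : (1 : K2).x = 1 := rfl
@[simp] lemma one_y : (1 : K2).y = 0 := rfl

@[ext] lemma ext {u v : K2} (hx : u.x = v.x) (hy : u.y = v.y) : u = v := by
  cases u; cases v; simp_all

instance : CommRing K2 where
  add_assoc a b c := by ext <;> simp <;> ring
  zero_add a := by ext <;> simp
  add_zero a := by ext <;> simp
  add_comm a b := by ext <;> simp <;> ring
  left_distrib a b c := by ext <;> simp <;> ring
  right_distrib a b c := by ext <;> simp <;> ring
  zero_mul a := by ext <;> simp
  mul_zero a := by ext <;> simp
  mul_assoc a b c := by ext <;> simp <;> ring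
  one_mul a := by ext <;> simp
  mul_one a := by ext <;> simp
  neg_add_cancel a := by ext <;> simp
  mul_comm a b := by ext <;> simp <;> ring
  sub_eq_add_neg a b := by ext <;> simp <;> ring
  nsmul := nsmulRec
  zsmul := zsmulRec

end K2

def ev : K2 → ℝ := fun u => (u.x : ℝ) + u.y * Real.sqrt 2

lemma ev_mul (u v : K2) : ev (u * v) = ev u * ev v := by
  have h2 : Real.sqrt 2 * Real.sqrt 2 = 2 := Real.mul_self_sqrt (by norm_num)
  simp only [ev, K2.mul_x, K2.mul_y]
  push_cast
  linear_combination (-(u.y : ℝ) * v.y) * h2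

instance : DecidableEq (ℍ[K2]) := fun a b =>
  decidable_of_iff (a.re = b.re ∧ a.imI = b.imI ∧ a.imJ = b.imJ ∧ a.imK = b.imK)
    (Quaternion.ext_iff.symm)

lemma sq2 : Real.sqrt 2 ^ 2 = 2 := Real.sq_sqrt (by norm_num)

def Φ : ℍ[K2] →* ℍ[ℝ] where
  toFun a := ⟨ev a.re, ev a.imI, ev a.imJ, ev a.imK⟩
  map_one' := by ext <;> simp [ev]
  map_mul' a b := by
    ext <;>
      simp only [Quaternion.re_mul, Quaternion.imI_mul,
        Quaternion.imJ_mul, Quaternion.imK_mul, ev_mul] <;> erw [QuaternionAlgebra.mk_mul_mk] <;>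
      simp [ev] <;> ring_nf <;> (try simp [sq2]) <;> (try ring)

def w (a₁ a₂ b₁ b₂ c₁ c₂ d₁ d₂ : ℤ) : ℍ[K2] := ⟨⟨a₁,a₂⟩,⟨b₁,b₂⟩,⟨c₁,c₂⟩,⟨d₁,d₂⟩⟩

lemma smul_Φ_w (c : ℝ) (a₁ a₂ b₁ b₂ c₁ c₂ d₁ d₂ : ℤ) :
    c • Φ (w a₁ a₂ b₁ b₂ c₁ c₂ d₁ d₂) =
      q (c*(a₁+a₂*Real.sqrt 2)) (c*(b₁+b₂*Real.sqrt 2))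
        (c*(c₁+c₂*Real.sqrt 2)) (c*(d₁+d₂*Real.sqrt 2)) := by
  ext <;> simp [Φ, w, ev, q] <;> left <;> rfl

lemma s_eq : s = 2⁻¹ * Real.sqrt 2 := by
  have h2 : Real.sqrt 2 * Real.sqrt 2 = 2 := Real.mul_self_sqrt (by norm_num)
  rw [s]
  rw [show (2:ℝ)⁻¹ * Real.sqrt 2 = Real.sqrt 2 / 2 by ring, eq_div_iff (by norm_num : (2:ℝ) ≠ 0),
    inv_mul_eq_div, div_eq_iff (by positivity : Real.sqrt 2 ≠ 0)]
  linarith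

def W0 : Finset ℍ[K2] :=
  {w 2 0 0 0 0 0 0 0,
   w (-2) 0 0 0 0 0 0 0,
   w 0 0 2 0 0 0 0 0,
   w 0 0 (-2) 0 0 0 0 0,
   w 0 0 0 0 2 0 0 0,
   w 0 0 0 0 (-2) 0 0 0,
   w 0 0 0 0 0 0 2 0,
   w 0 0 0 0 0 0 (-2) 0}
def U0 : Finset ℍ[K2] :=
  {w 4 0 0 0 0 0 0 0,
   w (-4) 0 0 0 0 0 0 0,
   w 0 0 4 0 0 0 0 0,
   w 0 0 (-4) 0 0 0 0 0,
   w 0 0 0 0 4 0 0 0,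
   w 0 0 0 0 (-4) 0 0 0,
   w 0 0 0 0 0 0 4 0,
   w 0 0 0 0 0 0 (-4) 0}
def Wp : Finset ℍ[K2] :=
  {w 1 0 1 0 1 0 1 0,
   w (-1) 0 (-1) 0 (-1) 0 (-1) 0,
   w 1 0 1 0 (-1) 0 (-1) 0,
   w 1 0 (-1) 0 1 0 (-1) 0,
   w 1 0 (-1) 0 (-1) 0 1 0,
   w (-1) 0 1 0 1 0 (-1) 0,
   w (-1) 0 1 0 (-1) 0 1 0,
   w (-1) 0 (-1) 0 1 0 1 0}
def Up : Finset ℍ[K2] :=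
  {w 2 0 2 0 2 0 2 0,
   w (-2) 0 (-2) 0 (-2) 0 (-2) 0,
   w 2 0 2 0 (-2) 0 (-2) 0,
   w 2 0 (-2) 0 2 0 (-2) 0,
   w 2 0 (-2) 0 (-2) 0 2 0,
   w (-2) 0 2 0 2 0 (-2) 0,
   w (-2) 0 2 0 (-2) 0 2 0,
   w (-2) 0 (-2) 0 2 0 2 0}
def Wm : Finset ℍ[K2] :=
  {w 1 0 (-1) 0 (-1) 0 (-1) 0,
   w (-1) 0 1 0 (-1) 0 (-1) 0,
   w (-1) 0 (-1) 0 1 0 (-1) 0,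
   w (-1) 0 (-1) 0 (-1) 0 1 0,
   w 1 0 1 0 1 0 (-1) 0,
   w 1 0 1 0 (-1) 0 1 0,
   w 1 0 (-1) 0 1 0 1 0,
   w (-1) 0 1 0 1 0 1 0}
def Um : Finset ℍ[K2] :=
  {w 2 0 (-2) 0 (-2) 0 (-2) 0,
   w (-2) 0 2 0 (-2) 0 (-2) 0,
   w (-2) 0 (-2) 0 2 0 (-2) 0,
   w (-2) 0 (-2) 0 (-2) 0 2 0,
   w 2 0 2 0 2 0 (-2) 0,
   w 2 0 2 0 (-2) 0 2 0,
   w 2 0 (-2) 0 2 0 2 0,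
   w (-2) 0 2 0 2 0 2 0}
def W1 : Finset ℍ[K2] :=
  {w 0 1 0 1 0 0 0 0,
   w 0 1 0 (-1) 0 0 0 0,
   w 0 (-1) 0 1 0 0 0 0,
   w 0 (-1) 0 (-1) 0 0 0 0,
   w 0 0 0 0 0 1 0 1,
   w 0 0 0 0 0 1 0 (-1),
   w 0 0 0 0 0 (-1) 0 1,
   w 0 0 0 0 0 (-1) 0 (-1)}
def U1 : Finset ℍ[K2] :=
  {w 0 2 0 2 0 0 0 0,
   w 0 2 0 (-2) 0 0 0 0,
   w 0 (-2) 0 2 0 0 0 0,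
   w 0 (-2) 0 (-2) 0 0 0 0,
   w 0 0 0 0 0 2 0 2,
   w 0 0 0 0 0 2 0 (-2),
   w 0 0 0 0 0 (-2) 0 2,
   w 0 0 0 0 0 (-2) 0 (-2)}
def W2 : Finset ℍ[K2] :=
  {w 0 1 0 0 0 1 0 0,
   w 0 1 0 0 0 (-1) 0 0,
   w 0 (-1) 0 0 0 1 0 0,
   w 0 (-1) 0 0 0 (-1) 0 0,
   w 0 0 0 1 0 0 0 1,
   w 0 0 0 1 0 0 0 (-1),
   w 0 0 0 (-1) 0 0 0 1,
   w 0 0 0 (-1) 0 0 0 (-1)}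
def U2 : Finset ℍ[K2] :=
  {w 0 2 0 0 0 2 0 0,
   w 0 2 0 0 0 (-2) 0 0,
   w 0 (-2) 0 0 0 2 0 0,
   w 0 (-2) 0 0 0 (-2) 0 0,
   w 0 0 0 2 0 0 0 2,
   w 0 0 0 2 0 0 0 (-2),
   w 0 0 0 (-2) 0 0 0 2,
   w 0 0 0 (-2) 0 0 0 (-2)}
def W3 : Finset ℍ[K2] :=
  {w 0 1 0 0 0 0 0 1,
   w 0 1 0 0 0 0 0 (-1),
   w 0 (-1) 0 0 0 0 0 1,
   w 0 (-1) 0 0 0 0 0 (-1),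
   w 0 0 0 1 0 1 0 0,
   w 0 0 0 1 0 (-1) 0 0,
   w 0 0 0 (-1) 0 1 0 0,
   w 0 0 0 (-1) 0 (-1) 0 0}
def U3 : Finset ℍ[K2] :=
  {w 0 2 0 0 0 0 0 2,
   w 0 2 0 0 0 0 0 (-2),
   w 0 (-2) 0 0 0 0 0 2,
   w 0 (-2) 0 0 0 0 0 (-2),
   w 0 0 0 2 0 2 0 0,
   w 0 0 0 2 0 (-2) 0 0,
   w 0 0 0 (-2) 0 2 0 0,
   w 0 0 0 (-2) 0 (-2) 0 0}

lemma smul_image_mul (A B : Set ℍ[K2]) :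
    ((fun u => (2⁻¹:ℝ) • Φ u) '' A) * ((fun u => (2⁻¹:ℝ) • Φ u) '' B)
      = (fun u => (4⁻¹:ℝ) • Φ u) '' (A * B) := by
  have key : ∀ x y : ℍ[K2],
      ((2⁻¹:ℝ) • Φ x) * ((2⁻¹:ℝ) • Φ y) = (4⁻¹:ℝ) • Φ (x*y) := by
    intro x y
    rw [map_mul, smul_mul_smul_comm]
    norm_num
  rw [← Set.image2_mul, ← Set.image2_mul, Set.image2_image_left, Set.image2_image_right,
    Set.image_image2]
  exact Set.image2_congr fun a _ b _ => key a b

lemma master {A B C : Finset ℍ[K2]} {SA SB SC : Set ℍ[ℝ]}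
    (hA : SA = (fun u => (2⁻¹:ℝ) • Φ u) '' ↑A)
    (hB : SB = (fun u => (2⁻¹:ℝ) • Φ u) '' ↑B)
    (hC : SC = (fun u => (4⁻¹:ℝ) • Φ u) '' ↑C)
    (h : A * B = C) : SA * SB = SC := by
  rw [hA, hB, hC, smul_image_mul, ← Finset.coe_mul, h]

set_option maxHeartbeats 1000000 in
lemma hW0 : V₀ = (fun u => (2⁻¹:ℝ) • Φ u) '' ↑W0 := by
  simp only [W0, Finset.coe_insert, Finset.coe_singleton, Set.image_insert_eq,
    Set.image_singleton, smul_Φ_w, V₀, s_eq]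
  norm_num

set_option maxHeartbeats 1000000 in
lemma hU0 : V₀ = (fun u => (4⁻¹:ℝ) • Φ u) '' ↑U0 := by
  simp only [U0, Finset.coe_insert, Finset.coe_singleton, Set.image_insert_eq,
    Set.image_singleton, smul_Φ_w, V₀, s_eq]
  norm_num

set_option maxHeartbeats 1000000 in
lemma hWp : Vp = (fun u => (2⁻¹:ℝ) • Φ u) '' ↑Wp := by
  simp only [Wp, Finset.coe_insert, Finset.coe_singleton, Set.image_insert_eq,
    Set.image_singleton, smul_Φ_w, Vp, s_eq]
  norm_num

set_option maxHeartbeats 1000000 in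
lemma hUp : Vp = (fun u => (4⁻¹:ℝ) • Φ u) '' ↑Up := by
  simp only [Up, Finset.coe_insert, Finset.coe_singleton, Set.image_insert_eq,
    Set.image_singleton, smul_Φ_w, Vp, s_eq]
  norm_num

set_option maxHeartbeats 1000000 in
lemma hWm : Vm = (fun u => (2⁻¹:ℝ) • Φ u) '' ↑Wm := by
  simp only [Wm, Finset.coe_insert, Finset.coe_singleton, Set.image_insert_eq,
    Set.image_singleton, smul_Φ_w, Vm, s_eq]
  norm_num

set_option maxHeartbeats 1000000 in
lemma hUm : Vm = (fun u => (4⁻¹:ℝ) • Φ u) '' ↑Um := by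
  simp only [Um, Finset.coe_insert, Finset.coe_singleton, Set.image_insert_eq,
    Set.image_singleton, smul_Φ_w, Vm, s_eq]
  norm_num

set_option maxHeartbeats 1000000 in
lemma hW1 : V₁ = (fun u => (2⁻¹:ℝ) • Φ u) '' ↑W1 := by
  simp only [W1, Finset.coe_insert, Finset.coe_singleton, Set.image_insert_eq,
    Set.image_singleton, smul_Φ_w, V₁, s_eq]
  norm_num
  try ring_nf

set_option maxHeartbeats 1000000 in
lemma hU1 : V₁ = (fun u => (4⁻¹:ℝ) • Φ u) '' ↑U1 := by
  simp only [U1, Finset.coe_insert, Finset.coe_singleton, Set.image_insert_eq,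
    Set.image_singleton, smul_Φ_w, V₁, s_eq]
  norm_num
  try ring_nf

set_option maxHeartbeats 1000000 in
lemma hW2 : V₂ = (fun u => (2⁻¹:ℝ) • Φ u) '' ↑W2 := by
  simp only [W2, Finset.coe_insert, Finset.coe_singleton, Set.image_insert_eq,
    Set.image_singleton, smul_Φ_w, V₂, s_eq]
  norm_num
  try ring_nf

set_option maxHeartbeats 1000000 in
lemma hU2 : V₂ = (fun u => (4⁻¹:ℝ) • Φ u) '' ↑U2 := by
  simp only [U2, Finset.coe_insert, Finset.coe_singleton, Set.image_insert_eq,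
    Set.image_singleton, smul_Φ_w, V₂, s_eq]
  norm_num
  try ring_nf

set_option maxHeartbeats 1000000 in
lemma hW3 : V₃ = (fun u => (2⁻¹:ℝ) • Φ u) '' ↑W3 := by
  simp only [W3, Finset.coe_insert, Finset.coe_singleton, Set.image_insert_eq,
    Set.image_singleton, smul_Φ_w, V₃, s_eq]
  norm_num
  try ring_nf

set_option maxHeartbeats 1000000 in
lemma hU3 : V₃ = (fun u => (4⁻¹:ℝ) • Φ u) '' ↑U3 := by
  simp only [U3, Finset.coe_insert, Finset.coe_singleton, Set.image_insert_eq,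
    Set.image_singleton, smul_Φ_w, V₃, s_eq]
  norm_num
  try ring_nf



set_option maxHeartbeats 4000000 in
theorem stmt16 :
    (V₀ * V₀ = V₀ ∧ V₀ * Vp = Vp ∧ Vp * V₀ = Vp ∧ V₀ * Vm = Vm ∧ Vm * V₀ = Vm ∧
      V₀ * V₁ = V₁ ∧ V₁ * V₀ = V₁ ∧ V₀ * V₂ = V₂ ∧ V₂ * V₀ = V₂ ∧
      V₀ * V₃ = V₃ ∧ V₃ * V₀ = V₃) ∧
    (Vp * Vp = Vm ∧ Vp * Vm = V₀ ∧ Vm * Vp = V₀ ∧ Vm * Vm = Vp) ∧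
    (Vp * V₁ = V₃ ∧ Vp * V₂ = V₁ ∧ Vp * V₃ = V₂) ∧
    (Vm * V₁ = V₂ ∧ Vm * V₂ = V₃ ∧ Vm * V₃ = V₁) ∧
    (V₁ * V₁ = V₀ ∧ V₂ * V₂ = V₀ ∧ V₃ * V₃ = V₀) ∧
    (V₁ * V₂ = Vp ∧ V₃ * V₁ = Vp ∧ V₂ * V₃ = Vp) ∧
    (V₂ * V₁ = Vm ∧ V₁ * V₃ = Vm ∧ V₃ * V₂ = Vm) :=
  ⟨⟨master hW0 hW0 hU0 (by decide), master hW0 hWp hUp (by decide), master hWp hW0 hUp (by decide), master hW0 hWm hUm (by decide), master hWm hW0 hUm (by decide), master hW0 hW1 hU1 (by decide), master hW1 hW0 hU1 (by decide), master hW0 hW2 hU2 (by decide), master hW2 hW0 hU2 (by decide), master hW0 hW3 hU3 (by decide), master hW3 hW0 hU3 (by decide)⟩,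
   ⟨master hWp hWp hUm (by decide), master hWp hWm hU0 (by decide), master hWm hWp hU0 (by decide), master hWm hWm hUp (by decide)⟩,
   ⟨master hWp hW1 hU3 (by decide), master hWp hW2 hU1 (by decide), master hWp hW3 hU2 (by decide)⟩,
   ⟨master hWm hW1 hU2 (by decide), master hWm hW2 hU3 (by decide), master hWm hW3 hU1 (by decide)⟩,
   ⟨master hW1 hW1 hU0 (by decide), master hW2 hW2 hU0 (by decide), master hW3 hW3 hU0 (by decide)⟩,
   ⟨master hW1 hW2 hUp (by decide), master hW3 hW1 hUp (by decide), master hW2 hW3 hUp (by decide)⟩,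
   ⟨master hW2 hW1 hUm (by decide), master hW1 hW3 hUm (by decide), master hW3 hW2 hUm (by decide)⟩⟩

end
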